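/- Let T : E → F be a positive linear operator that preserves disjointness (|T(x)| ∧ |T(y)| = 0 whenever x, y ∈ E satisfy |x| ∧ |y| = 0), and let S : G → F be a positive, order continuous linear operator with S(y) = T(y) for all y ∈ E. Then S preserves disjointness: for all x, y ∈ G with |x| ∧ |y| = 0 one has |S(x)| ∧ |S(y)| = 0. -/

import Mathlib

theorem stmt18
    {G : Type*} [Lattice G] [AddCommGroup G] [Module ℝ G]
    [CovariantClass G G (· + ·) (· ≤ ·)] [PosSMulMono ℝ G]
    (arch : ∀ x y : G, (∀ n : ℕ, n • x ≤ y) → x ≤ 0)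
    (E : Set G)
    (hE0 : (0 : G) ∈ E)
    (hEadd : ∀ x ∈ E, ∀ y ∈ E, x + y ∈ E)
    (hEsmul : ∀ (c : ℝ), ∀ x ∈ E, c • x ∈ E)
    (hEsup : ∀ x ∈ E, ∀ y ∈ E, x ⊔ y ∈ E)
    (hEinf : ∀ x ∈ E, ∀ y ∈ E, x ⊓ y ∈ E)
    (hdense : ∀ x : G, 0 < x → ∃ y ∈ E, 0 < y ∧ y ≤ x)
    (hmaj : ∀ x : G, ∃ y ∈ E, x ≤ y)
    {F : Type*} [ConditionallyCompleteLattice F] [AddCommGroup F] [Module ℝ F]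
    [CovariantClass F F (· + ·) (· ≤ ·)] [PosSMulMono ℝ F]
    (T : G → F)
    (hT_add : ∀ x ∈ E, ∀ y ∈ E, T (x + y) = T x + T y)
    (hT_smul : ∀ (c : ℝ), ∀ x ∈ E, T (c • x) = c • T x)
    (hT_pos : ∀ x ∈ E, 0 ≤ x → 0 ≤ T x)
    (hT_disj : ∀ x ∈ E, ∀ y ∈ E, |x| ⊓ |y| = 0 → |T x| ⊓ |T y| = 0)
    (S : G →ₗ[ℝ] F)
    (hS_pos : ∀ x : G, 0 ≤ x → 0 ≤ S x)
    (hS_oc : ∀ D : Set G, D.Nonempty → DirectedOn (· ≥ ·) D → IsGLB D 0 →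
      IsGLB (S '' D) 0)
    (hS_ext : ∀ y ∈ E, S y = T y) :
    ∀ x y : G, |x| ⊓ |y| = 0 → |S x| ⊓ |S y| = 0 := by
  -- S is monotone
  have hSmono : ∀ {p q : G}, p ≤ q → S p ≤ S q := by
    intro p q h
    have h0 : 0 ≤ S (q - p) := hS_pos _ (sub_nonneg.2 h)
    rw [map_sub] at h0
    exact sub_nonneg.1 h0
  -- Key lemma: for 0 ≤ a, the set {a - u : u ∈ E, 0 ≤ u ≤ a} has infimum 0.
  have glb : ∀ a : G, 0 ≤ a →
      IsGLB {w : G | ∃ u ∈ E, 0 ≤ u ∧ u ≤ a ∧ w = a - u} 0 := by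
    intro a ha
    constructor
    · rintro w ⟨u, hu, hu0, hua, rfl⟩
      exact sub_nonneg.2 hua
    · intro w hw
      -- hw : ∀ u admissible, w ≤ a - u, i.e. u ≤ a - w
      set c : G := a ⊓ (a - w) with hc
      have hub : ∀ u ∈ E, 0 ≤ u → u ≤ a → u ≤ c := by
        intro u hu hu0 hua
        refine le_inf hua ?_
        have := hw ⟨u, hu, hu0, hua, rfl⟩
        exact le_sub_comm.1 this
      have hca : c ≤ a := inf_le_left
      have hd0 : 0 ≤ a - c := sub_nonneg.2 hca
      have hdeq : a - c = 0 := by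
        by_contra hne
        have hdpos : 0 < a - c := lt_of_le_of_ne hd0 (Ne.symm hne)
        obtain ⟨y, hy, hy0, hyd⟩ := hdense _ hdpos
        have key : ∀ n : ℕ, (n • y ∈ E ∧ 0 ≤ n • y ∧ n • y ≤ a) := by
          intro n
          induction n with
          | zero => simp only [zero_smul]; exact ⟨hE0, le_refl _, ha⟩
          | succ n ih =>
            obtain ⟨hmem, h0, hle⟩ := ih
            have hyc : n • y ≤ c := hub _ hmem h0 hle
            have : n • y + y ≤ a := by
              have h' : y ≤ a - n • y := hyd.trans (sub_le_sub_left hyc a)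
              exact le_sub_iff_add_le'.1 h'
            refine ⟨?_, ?_, ?_⟩
            · rw [succ_nsmul]; exact hEadd _ hmem _ hy
            · rw [succ_nsmul]; exact add_nonneg h0 hy0.le
            · rw [succ_nsmul]; exact this
        have := arch y a (fun n => (key n).2.2)
        exact absurd this (show (0 : G) < y from hy0).not_ge
      have hac : a ≤ a - w := by
        calc a = c := sub_eq_zero.1 hdeq
          _ ≤ a - w := inf_le_right
      have := le_sub_iff_add_le.1 hac
      exact (add_le_iff_nonpos_right a).1 this
  -- main proof
  intro x y hxy
  set a : G := |x| with hadef
  set b : G := |y| with hbdef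
  have ha : 0 ≤ a := abs_nonneg x
  have hb : 0 ≤ b := abs_nonneg y
  set D : Set G := {w : G | ∃ u ∈ E, ∃ v ∈ E,
    0 ≤ u ∧ u ≤ a ∧ 0 ≤ v ∧ v ≤ b ∧ w = (a - u) + (b - v)} with hD
  have hDne : D.Nonempty :=
    ⟨a + b, 0, hE0, 0, hE0, le_refl _, ha, le_refl _, hb, by simp⟩
  have hDdir : DirectedOn (· ≥ ·) D := by
    rintro w₁ ⟨u₁, hu₁, v₁, hv₁, hu₁0, hu₁a, hv₁0, hv₁b, rfl⟩
      w₂ ⟨u₂, hu₂, v₂, hv₂, hu₂0, hu₂a, hv₂0, hv₂b, rfl⟩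
    refine ⟨(a - (u₁ ⊔ u₂)) + (b - (v₁ ⊔ v₂)),
      ⟨u₁ ⊔ u₂, hEsup _ hu₁ _ hu₂, v₁ ⊔ v₂, hEsup _ hv₁ _ hv₂,
        le_trans hu₁0 le_sup_left, sup_le hu₁a hu₂a,
        le_trans hv₁0 le_sup_left, sup_le hv₁b hv₂b, rfl⟩, ?_, ?_⟩
    · exact add_le_add (sub_le_sub_left le_sup_left a) (sub_le_sub_left le_sup_left b)
    · exact add_le_add (sub_le_sub_left le_sup_right a) (sub_le_sub_left le_sup_right b)
  have hDglb : IsGLB D 0 := by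
    constructor
    · rintro w ⟨u, hu, v, hv, hu0, hua, hv0, hvb, rfl⟩
      exact add_nonneg (sub_nonneg.2 hua) (sub_nonneg.2 hvb)
    · intro w hw
      have h1 : ∀ v ∈ E, 0 ≤ v → v ≤ b → w ≤ b - v := by
        intro v hv hv0 hvb
        have hlb : w - (b - v) ∈ lowerBounds {z : G | ∃ u ∈ E, 0 ≤ u ∧ u ≤ a ∧ z = a - u} := by
          rintro z ⟨u, hu, hu0, hua, rfl⟩
          have h' := hw ⟨u, hu, v, hv, hu0, hua, hv0, hvb, rfl⟩
          exact sub_le_iff_le_add.2 h'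
        have h'' := (glb a ha).2 hlb
        exact sub_nonpos.1 h''
      have hlb2 : w ∈ lowerBounds {z : G | ∃ v ∈ E, 0 ≤ v ∧ v ≤ b ∧ z = b - v} := by
        rintro z ⟨v, hv, hv0, hvb, rfl⟩
        exact h1 v hv hv0 hvb
      exact (glb b hb).2 hlb2
  have hSD := hS_oc D hDne hDdir hDglb
  -- S a ⊓ S b is a lower bound of S '' D
  have hzlb : S a ⊓ S b ∈ lowerBounds (S '' D) := by
    rintro _ ⟨w, ⟨u, hu, v, hv, hu0, hua, hv0, hvb, rfl⟩, rfl⟩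
    have hSuv : S u ⊓ S v = 0 := by
      have huv : |u| ⊓ |v| = 0 := by
        rw [abs_of_nonneg hu0, abs_of_nonneg hv0]
        refine le_antisymm ?_ (le_inf hu0 hv0)
        calc u ⊓ v ≤ a ⊓ b := inf_le_inf hua hvb
          _ = 0 := hxy
      have hT := hT_disj u hu v hv huv
      rw [abs_of_nonneg (hT_pos u hu hu0), abs_of_nonneg (hT_pos v hv hv0)] at hT
      rw [hS_ext u hu, hS_ext v hv]
      exact hT
    have hSw : S ((a - u) + (b - v)) = S (a - u) + S (b - v) := map_add S _ _
    rw [hSw]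
    set c := S (a - u) with hcdef
    set d := S (b - v) with hddef
    have hc0 : 0 ≤ c := hS_pos _ (sub_nonneg.2 hua)
    have hd0 : 0 ≤ d := hS_pos _ (sub_nonneg.2 hvb)
    have hSa : S a = S u + c := by rw [hcdef, map_sub]; abel
    have hSb : S b = S v + d := by rw [hddef, map_sub]; abel
    have step1 : S a ⊓ S b ≤ (S u + (c + d)) ⊓ (S v + (c + d)) := by
      refine inf_le_inf ?_ ?_
      · rw [hSa]; exact add_le_add le_rfl (le_add_of_nonneg_right hd0)
      · rw [hSb]
        calc S v + d ≤ S v + (d + c) := add_le_add le_rfl (le_add_of_nonneg_right hc0)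
          _ = S v + (c + d) := by abel
    have step2 : (S u + (c + d)) ⊓ (S v + (c + d)) ≤ S u ⊓ S v + (c + d) := by
      have h1 : (S u + (c + d)) ⊓ (S v + (c + d)) - (c + d) ≤ S u :=
        sub_le_iff_le_add.2 inf_le_left
      have h2 : (S u + (c + d)) ⊓ (S v + (c + d)) - (c + d) ≤ S v :=
        sub_le_iff_le_add.2 inf_le_right
      exact sub_le_iff_le_add.1 (le_inf h1 h2)
    calc S a ⊓ S b ≤ (S u + (c + d)) ⊓ (S v + (c + d)) := step1
      _ ≤ S u ⊓ S v + (c + d) := step2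
      _ = c + d := by rw [hSuv, zero_add]
  have hz0 : S a ⊓ S b ≤ 0 := hSD.2 hzlb
  have hz0' : 0 ≤ S a ⊓ S b := le_inf (hS_pos a ha) (hS_pos b hb)
  -- |S x| ≤ S a, |S y| ≤ S b
  have habs : ∀ z : G, |S z| ≤ S |z| := by
    intro z
    refine abs_le'.2 ⟨hSmono (le_abs_self z), ?_⟩
    have : S (-z) ≤ S |z| := hSmono (neg_le_abs z)
    rwa [map_neg] at this
  refine le_antisymm ?_ (le_inf (abs_nonneg _) (abs_nonneg _))
  calc |S x| ⊓ |S y| ≤ S a ⊓ S b := inf_le_inf (habs x) (habs y)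
    _ ≤ 0 := hz0
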